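/- arXiv:2110.05616 — 7 statements merged into one kernel-verified Lean document; each statement's English description precedes it below -/
import Mathlib

section
/- Let F be a field, let A, B ⊆ F be finite, disjoint, and both λ-null. Then A ∪ B is λ-null. -/
open Polynomial

/-- `A` is `l`-null: in `∏_{a ∈ A} (X - a)` the coefficients of
`X^{|A|-1}, ..., X^{|A|-l}` vanish. -/
def IsNull {F : Type*} [Field F] (A : Finset F) (l : ℕ) : Prop :=
  ∀ r : ℕ, 1 ≤ r → r ≤ l → (∏ a ∈ A, (X - C a)).coeff (A.card - r) = 0

theorem isNull_union {F : Type*} [Field F] [DecidableEq F]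
    (A B : Finset F) (hdisj : Disjoint A B) (l : ℕ)
    (hA : IsNull A l) (hB : IsNull B l) :
    IsNull (A ∪ B) l := by
  intro r hr1 hrl
  rw [Finset.card_union_of_disjoint hdisj, Finset.prod_union hdisj, coeff_mul]
  have hPdeg : (∏ a ∈ A, (X - C a)).natDegree = A.card := by
    rw [natDegree_prod_of_monic (h := fun a _ => monic_X_sub_C a)]; simp
  have hQdeg : (∏ a ∈ B, (X - C a)).natDegree = B.card := by
    rw [natDegree_prod_of_monic (h := fun a _ => monic_X_sub_C a)]; simp
  apply Finset.sum_eq_zero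
  rintro ⟨i, j⟩ hij
  rw [Finset.HasAntidiagonal.mem_antidiagonal] at hij
  by_cases hi : A.card < i
  · have : (∏ a ∈ A, (X - C a)).coeff i = 0 :=
      coeff_eq_zero_of_natDegree_lt (by omega)
    rw [this, zero_mul]
  · by_cases hj : B.card < j
    · have : (∏ a ∈ B, (X - C a)).coeff j = 0 :=
        coeff_eq_zero_of_natDegree_lt (by omega)
      rw [this, mul_zero]
    · by_cases hieq : i = A.card
      · have hj' : j = B.card - r := by omega
        rw [hj', hB r hr1 hrl, mul_zero]
      · have hi' : i = A.card - (A.card - i) := by omega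
        rw [hi', hA (A.card - i) (by omega) (by omega), zero_mul]
end

section
/- Let F be a field of characteristic p > 0 and A ⊆ F a coset of a finite additive subgroup with |A| > 1. Then p_r(A) = Σ_{a∈A} a^r = 0 for all 1 ≤ r ≤ |A|−2, but p_{|A|−1}(A) ≠ 0. -/
open Polynomial

theorem additive_coset_power_sums {F : Type*} [Field F]
    (p : ℕ) [hp : Fact p.Prime] [CharP F p]
    (A : Finset F)
    (hA : ∃ H : AddSubgroup F, ∃ t : F, (A : Set F) = (fun x => t + x) '' (H : Set F))
    (hcard : 1 < A.card) :
    (∀ r : ℕ, 1 ≤ r → r ≤ A.card - 2 → ∑ a ∈ A, a ^ r = 0) ∧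
    ∑ a ∈ A, a ^ (A.card - 1) ≠ 0 := by
  classical
  obtain ⟨H, t, hAH⟩ := hA
  have hmem : ∀ x : F, x ∈ A ↔ x - t ∈ H := by
    intro x
    constructor
    · intro hx
      have hx' : (x : F) ∈ (A : Set F) := hx
      rw [hAH] at hx'
      obtain ⟨y, hy, rfl⟩ := hx'
      simpa using hy
    · intro hx
      have : x ∈ (A : Set F) := by
        rw [hAH]; exact ⟨x - t, hx, by ring⟩
      exact this
  have hshift : ∀ a₁ ∈ A, ∀ a₂ ∈ A, ∀ b ∈ A, b + (a₂ - a₁) ∈ A := by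
    intro a₁ h₁ a₂ h₂ b hb
    rw [hmem] at h₁ h₂ hb ⊢
    have : b + (a₂ - a₁) - t = (b - t) + ((a₂ - t) - (a₁ - t)) := by ring
    rw [this]
    exact add_mem hb (sub_mem h₂ h₁)
  -- independence of the product
  have hc : ∀ a₁ ∈ A, ∀ a₂ ∈ A,
      ∏ b ∈ A.erase a₁, (a₁ - b) = ∏ b ∈ A.erase a₂, (a₂ - b) := by
    intro a₁ h₁ a₂ h₂
    refine Finset.prod_nbij' (fun b => b + (a₂ - a₁)) (fun b => b + (a₁ - a₂)) ?_ ?_ ?_ ?_ ?_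
    · intro b hb
      rw [Finset.mem_erase] at hb ⊢
      refine ⟨fun h => hb.1 (by linear_combination h), hshift a₁ h₁ a₂ h₂ b hb.2⟩
    · intro b hb
      rw [Finset.mem_erase] at hb ⊢
      refine ⟨fun h => hb.1 (by linear_combination h), hshift a₂ h₂ a₁ h₁ b hb.2⟩
    · intro b _; ring
    · intro b _; ring
    · intro b _; ring
  obtain ⟨a₀, ha₀⟩ : A.Nonempty := Finset.card_pos.mp (by omega)
  set c : F := ∏ b ∈ A.erase a₀, (a₀ - b) with hcdef
  have hc0 : c ≠ 0 := by
    refine Finset.prod_ne_zero_iff.mpr ?_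
    intro b hb
    exact sub_ne_zero_of_ne (Ne.symm (Finset.ne_of_mem_erase hb))
  have key : ∀ r : ℕ, r ≤ A.card - 1 →
      ∑ a ∈ A, a ^ r = if r = A.card - 1 then c else 0 := by
    intro r hr
    set P : F[X] := (∑ a ∈ A, C (a ^ r) * ∏ b ∈ A.erase a, (X - C b)) - C c * X ^ r with hPdef
    have hMdeg : ∀ a ∈ A, (∏ b ∈ A.erase a, (X - C b) : F[X]).natDegree = A.card - 1 := by
      intro a ha
      rw [natDegree_prod_of_monic _ _ (fun b _ => monic_X_sub_C b)]
      simp [Finset.card_erase_of_mem ha]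
    have hMmonic : ∀ a ∈ A, (∏ b ∈ A.erase a, (X - C b) : F[X]).Monic :=
      fun a _ => monic_prod_of_monic _ _ (fun b _ => monic_X_sub_C b)
    have hP0 : P = 0 := by
      apply eq_zero_of_natDegree_lt_card_of_eval_eq_zero' P A
      · intro a ha
        have heval : ∀ a' ∈ A, a' ≠ a →
            (C (a' ^ r) * ∏ b ∈ A.erase a', (X - C b) : F[X]).eval a = 0 := by
          intro a' ha' hne
          rw [eval_mul, eval_prod]
          have : ∏ b ∈ A.erase a', eval a (X - C b) = 0 := by
            apply Finset.prod_eq_zero (Finset.mem_erase.mpr ⟨hne.symm, ha⟩)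
            simp
          rw [this, mul_zero]
        rw [hPdef, eval_sub, eval_finset_sum, Finset.sum_eq_single a
          (fun a' ha' hne => heval a' ha' hne) (fun h => absurd ha h)]
        simp only [eval_mul, eval_C, eval_prod, eval_sub, eval_X, eval_pow]
        rw [Finset.prod_congr rfl (fun b _ => rfl), hc a ha a₀ ha₀, ← hcdef]
        ring
      · refine lt_of_le_of_lt (natDegree_sub_le _ _) ?_
        have h1 : (∑ a ∈ A, C (a ^ r) * ∏ b ∈ A.erase a, (X - C b) : F[X]).natDegree
            ≤ A.card - 1 := by
          apply natDegree_sum_le_of_forall_le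
          intro a ha
          refine le_trans (natDegree_mul_le) ?_
          simp [hMdeg a ha]
        have h2 : (C c * X ^ r : F[X]).natDegree ≤ A.card - 1 := by
          refine le_trans (natDegree_mul_le) ?_
          simp only [natDegree_C, natDegree_pow, natDegree_X, zero_add, mul_one]
          exact hr
        have := max_le h1 h2
        omega
    have hcoeff := congrArg (fun Q : F[X] => Q.coeff (A.card - 1)) hP0
    simp only [hPdef, coeff_sub, coeff_zero, finset_sum_coeff, coeff_C_mul, coeff_X_pow] at hcoeff
    have hco : ∀ a ∈ A, (∏ b ∈ A.erase a, (X - C b) : F[X]).coeff (A.card - 1) = 1 := by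
      intro a ha
      have := (hMmonic a ha).coeff_natDegree
      rwa [hMdeg a ha] at this
    rw [Finset.sum_congr rfl (fun a ha => by rw [hco a ha, mul_one])] at hcoeff
    by_cases hr' : r = A.card - 1
    · rw [if_pos hr']
      rw [if_pos hr'.symm, mul_one] at hcoeff
      linear_combination hcoeff
    · rw [if_neg hr']
      rw [if_neg (fun h => hr' h.symm), mul_zero, sub_zero] at hcoeff
      exact hcoeff
  constructor
  · intro r hr1 hr2
    have := key r (by omega)
    rwa [if_neg (by omega)] at this
  · have := key (A.card - 1) le_rfl
    rw [if_pos rfl] at this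
    rw [this]
    exact hc0
end

section
/- Let a₁,...,a_m (m ≥ 2) be distinct elements of a field F, and let d ≥ 0 be an integer. Then Σ_{k=1}^{m} a_k^d / ∏_{j≠k}(a_k − a_j) = Σ_{i₁+...+i_m = d−m+1, i_j ≥ 0} a₁^{i₁}···a_m^{i_m}, where the right-hand side is the complete homogeneous symmetric polynomial h_{d−m+1}(a₁,...,a_m) (an empty sum, equal to 0, when d < m−1). -/
open Finset Polynomial

-- product over erase of succ / erase of zero
lemma prod_erase_succ' {M : Type*} [CommMonoid M] {m : ℕ} (f : Fin (m+1) → M) (k : Fin m) :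
    ∏ j ∈ Finset.univ.erase k.succ, f j = f 0 * ∏ j ∈ Finset.univ.erase k, f j.succ := by
  have h := Finset.map_erase (⟨Fin.succ, Fin.succ_injective m⟩ : Fin m ↪ Fin (m+1))
    Finset.univ k
  simp only [Function.Embedding.coeFn_mk] at h
  rw [Fin.univ_succ, Finset.cons_eq_insert,
    Finset.erase_insert_of_ne (Fin.succ_ne_zero k).symm,
    Finset.prod_insert (by simp), ← h, Finset.prod_map]
  rfl

lemma prod_erase_zero' {M : Type*} [CommMonoid M] {m : ℕ} (f : Fin (m+1) → M) :
    ∏ j ∈ Finset.univ.erase (0 : Fin (m+1)), f j = ∏ j : Fin m, f j.succ := by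
  rw [Fin.univ_succ, Finset.cons_eq_insert, Finset.erase_insert (by simp), Finset.prod_map]
  rfl

-- Lemma 0
lemma aux0 {F : Type*} [Field F] {m : ℕ} (hm : 2 ≤ m) (a : Fin m → F)
    (ha : Function.Injective a) :
    ∑ k : Fin m, (∏ j ∈ Finset.univ.erase k, (a k - a j))⁻¹ = 0 := by
  have hne : Nonempty (Fin m) := ⟨⟨0, by omega⟩⟩
  have hinj : Set.InjOn a (Finset.univ : Finset (Fin m)) := fun x _ y _ h => ha h
  have h1 := Lagrange.sum_basis hinj Finset.univ_nonempty
  have h2 := congrArg (fun p => Polynomial.coeff p (m - 1)) h1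
  simp only [Polynomial.finset_sum_coeff] at h2
  have h3 : ∀ k : Fin m, (Lagrange.basis Finset.univ a k).coeff (m - 1)
      = (∏ j ∈ Finset.univ.erase k, (a k - a j))⁻¹ := by
    intro k
    have hb : Lagrange.basis Finset.univ a k =
        Polynomial.C (∏ j ∈ Finset.univ.erase k, (a k - a j)⁻¹) *
          ∏ j ∈ Finset.univ.erase k, (X - Polynomial.C (a j)) := by
      rw [Lagrange.basis]
      simp_rw [Lagrange.basisDivisor]
      rw [Finset.prod_mul_distrib, map_prod]
    have hmon : ∀ j ∈ Finset.univ.erase k, (X - Polynomial.C (a j)).Monic :=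
      fun j _ => monic_X_sub_C _
    have hP : (∏ j ∈ Finset.univ.erase k, (X - Polynomial.C (a j))).Monic :=
      monic_prod_of_monic _ _ hmon
    have hdeg : (∏ j ∈ Finset.univ.erase k, (X - Polynomial.C (a j))).natDegree = m - 1 := by
      rw [Polynomial.natDegree_prod_of_monic _ _ hmon]
      simp [Finset.card_erase_of_mem]
    rw [hb, Polynomial.coeff_C_mul, ← hdeg, hP.coeff_natDegree, mul_one,
      Finset.prod_inv_distrib]
  simp_rw [h3] at h2
  rw [h2, Polynomial.coeff_one, if_neg (by omega)]

lemma S_rec {F : Type*} [Field F] {m : ℕ} (hm : 1 ≤ m) (a : Fin (m+1) → F)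
    (ha : Function.Injective a) (d : ℕ) :
    ∑ k : Fin (m+1), a k ^ d / ∏ j ∈ Finset.univ.erase k, (a k - a j)
    = ∑ i ∈ Finset.range d, a 0 ^ i *
        ∑ k : Fin m, a k.succ ^ (d - 1 - i) /
          ∏ j ∈ Finset.univ.erase k, (a k.succ - a j.succ) := by
  have hD : ∀ k : Fin (m+1), (∏ j ∈ Finset.univ.erase k, (a k - a j)) ≠ 0 := by
    intro k
    rw [Finset.prod_ne_zero_iff]
    intro j hj
    exact sub_ne_zero_of_ne (fun h => (Finset.mem_erase.mp hj).1 (ha h.symm))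
  have hP : ∀ k : Fin m, (∏ j ∈ Finset.univ.erase k, (a k.succ - a j.succ)) ≠ 0 := by
    intro k
    rw [Finset.prod_ne_zero_iff]
    intro j hj
    exact sub_ne_zero_of_ne
      (fun h => (Finset.mem_erase.mp hj).1 (Fin.succ_injective _ (ha h.symm)))
  have hx : ∀ k : Fin m, a k.succ - a 0 ≠ 0 :=
    fun k => sub_ne_zero_of_ne (fun h => Fin.succ_ne_zero k (ha h))
  -- per-term expansion
  have hterm : ∀ k : Fin m,
      a k.succ ^ d / ∏ j ∈ Finset.univ.erase k.succ, (a k.succ - a j)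
      = (∑ i ∈ Finset.range d, a 0 ^ i * a k.succ ^ (d - 1 - i)) /
          (∏ j ∈ Finset.univ.erase k, (a k.succ - a j.succ))
        + a 0 ^ d / ∏ j ∈ Finset.univ.erase k.succ, (a k.succ - a j) := by
    intro k
    rw [prod_erase_succ' (fun j => a k.succ - a j) k]
    have hnum : a k.succ ^ d
        = (∑ i ∈ Finset.range d, a 0 ^ i * a k.succ ^ (d - 1 - i)) * (a k.succ - a 0)
          + a 0 ^ d := by
      have h := geom_sum₂_mul (a 0) (a k.succ) d
      linear_combination h
    rw [hnum, add_div]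
    congr 1
    rw [mul_div_assoc, div_mul_eq_div_div, div_self (hx k), one_div, ← div_eq_mul_inv]
  -- main computation
  rw [Fin.sum_univ_succ]
  simp_rw [hterm]
  rw [Finset.sum_add_distrib, add_comm, add_assoc]
  have hzero : (∑ k : Fin m, a 0 ^ d / ∏ j ∈ Finset.univ.erase k.succ, (a k.succ - a j))
      + a 0 ^ d / ∏ j ∈ Finset.univ.erase (0 : Fin (m+1)), (a 0 - a j) = 0 := by
    have h0 := aux0 (by omega) a ha
    rw [Fin.sum_univ_succ] at h0
    have := congrArg (fun x => a 0 ^ d * x) h0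
    simp only [mul_zero, Finset.mul_sum, mul_add] at this
    calc (∑ k : Fin m, a 0 ^ d / ∏ j ∈ Finset.univ.erase k.succ, (a k.succ - a j))
        + a 0 ^ d / ∏ j ∈ Finset.univ.erase (0 : Fin (m+1)), (a 0 - a j)
        = a 0 ^ d * ((∏ j ∈ Finset.univ.erase (0:Fin (m+1)), (a 0 - a j))⁻¹
            + ∑ k : Fin m, (∏ j ∈ Finset.univ.erase k.succ, (a k.succ - a j))⁻¹) := by
          rw [mul_add, Finset.mul_sum]
          simp_rw [div_eq_mul_inv]
          ring
      _ = 0 := by rw [h0, mul_zero]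
  rw [hzero, add_zero]
  simp_rw [Finset.sum_div, mul_div_assoc]
  rw [Finset.sum_comm]
  simp_rw [Finset.mul_sum]

lemma H_rec {F : Type*} [CommSemiring F] {m : ℕ} (a : Fin (m+1) → F) (r : ℕ) :
    ∑ t ∈ Finset.Nat.antidiagonalTuple (m+1) r, ∏ j, a j ^ t j
    = ∑ ij ∈ Finset.HasAntidiagonal.antidiagonal r, a 0 ^ ij.1 *
        ∑ t ∈ Finset.Nat.antidiagonalTuple m ij.2, ∏ j, a j.succ ^ t j := by
  simp_rw [Finset.mul_sum]
  rw [Finset.sum_sigma']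
  refine (Finset.sum_bij (fun x _ => Fin.cons x.1.1 x.2) ?_ ?_ ?_ ?_).symm
  · rintro ⟨⟨i, j⟩, t⟩ hx
    rw [Finset.mem_sigma] at hx
    obtain ⟨h1, h2⟩ := hx
    dsimp only at h1 h2 ⊢
    rw [Finset.Nat.mem_antidiagonalTuple, Fin.sum_univ_succ, Fin.cons_zero]
    simp_rw [Fin.cons_succ]
    rw [Finset.Nat.mem_antidiagonalTuple.mp h2]
    exact Finset.HasAntidiagonal.mem_antidiagonal.mp h1
  · rintro ⟨⟨i₁, j₁⟩, t₁⟩ h₁ ⟨⟨i₂, j₂⟩, t₂⟩ h₂ h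
    rw [Finset.mem_sigma] at h₁ h₂
    obtain ⟨h₁a, h₁b⟩ := h₁
    obtain ⟨h₂a, h₂b⟩ := h₂
    dsimp only at h₁a h₁b h₂a h₂b h
    have hi : i₁ = i₂ := by
      have := congrFun h 0
      simpa using this
    have ht : t₁ = t₂ := by
      funext j
      have := congrFun h j.succ
      simpa using this
    have hj : j₁ = j₂ := by
      rw [← Finset.Nat.mem_antidiagonalTuple.mp h₁b, ← Finset.Nat.mem_antidiagonalTuple.mp h₂b,
        ht]
    subst hi ht hj
    rfl
  · intro u hu
    refine ⟨⟨(u 0, ∑ j : Fin m, u j.succ), Fin.tail u⟩, ?_, ?_⟩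
    · rw [Finset.mem_sigma]
      constructor
      · rw [Finset.HasAntidiagonal.mem_antidiagonal]
        rw [Finset.Nat.mem_antidiagonalTuple] at hu
        rw [← hu, Fin.sum_univ_succ]
      · rw [Finset.Nat.mem_antidiagonalTuple]
        rfl
    · exact Fin.cons_self_tail u
  · rintro ⟨⟨i, j⟩, t⟩ hx
    dsimp only
    rw [Fin.prod_univ_succ, Fin.cons_zero]
    simp_rw [Fin.cons_succ]

lemma key {F : Type*} [Field F] : ∀ m : ℕ, 1 ≤ m → ∀ a : Fin m → F, Function.Injective a →
    ∀ d : ℕ,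
    ∑ k : Fin m, a k ^ d / ∏ j ∈ Finset.univ.erase k, (a k - a j) =
      (if d + 1 < m then 0 else
        ∑ i ∈ Finset.Nat.antidiagonalTuple m (d + 1 - m), ∏ j : Fin m, a j ^ i j) := by
  intro m
  induction m with
  | zero => omega
  | succ n IH =>
    intro _ a ha d
    rcases Nat.eq_zero_or_pos n with rfl | hn
    · -- base case m = 1
      rw [if_neg (by omega)]
      have h1 : (Finset.univ : Finset (Fin 1)).erase 0 = ∅ := by decide
      rw [Fin.sum_univ_one, h1, Finset.prod_empty, div_one]
      rw [show d + 1 - 1 = d from rfl, Finset.Nat.antidiagonalTuple_one, Finset.sum_singleton,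
        Fin.prod_univ_one]
      rfl
    · -- inductive step
      have IH' := IH hn (fun k => a k.succ) (ha.comp (Fin.succ_injective n))
      rw [S_rec hn a ha d]
      simp_rw [IH']
      by_cases hd : d < n
      · rw [if_pos (by omega)]
        apply Finset.sum_eq_zero
        intro i hi
        rw [Finset.mem_range] at hi
        rw [if_pos (by omega), mul_zero]
      · rw [if_neg (by omega), H_rec]
        rw [Finset.Nat.sum_antidiagonal_eq_sum_range_succ_mk]
        have hsub : Finset.range (d + 1 - (n + 1) + 1) ⊆ Finset.range d := by
          intro i hi
          rw [Finset.mem_range] at hi ⊢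
          omega
        rw [← Finset.sum_subset hsub (by
          intro i hi hni
          rw [Finset.mem_range] at hi
          rw [Finset.mem_range] at hni
          rw [if_pos (by omega), mul_zero])]
        apply Finset.sum_congr rfl
        intro i hi
        rw [Finset.mem_range] at hi
        rw [if_neg (by omega)]
        have : d - 1 - i + 1 - n = d + 1 - (n + 1) - i := by omega
        rw [this]

theorem sylvester_identity {F : Type*} [Field F] (m : ℕ) (hm : 2 ≤ m)
    (a : Fin m → F) (ha : Function.Injective a) (d : ℕ) :
    ∑ k : Fin m, a k ^ d / ∏ j ∈ Finset.univ.erase k, (a k - a j) =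
      (if d + 1 < m then 0 else
        ∑ i ∈ Finset.Nat.antidiagonalTuple m (d + 1 - m), ∏ j : Fin m, a j ^ i j) :=
  key m (by omega) a ha d
end

section
/- Let A₁,...,A_n be λ-null finite subsets of a field F. Suppose f ∈ F[X₁,...,X_n] contains a monomial X₁^{k₁}···X_n^{k_n} with nonzero coefficient, where k_i < |A_i| for all i and deg(f) ≤ k₁+...+k_n+λ. Then there exists a point a ∈ A₁×···×A_n with f(a) ≠ 0. -/
open Polynomial

namespace SCNAux

variable {F : Type*} [Field F] [DecidableEq F]

/-- The coefficient-extraction functional applied to the monomial `X^m`. -/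
noncomputable def L (A : Finset F) (k m : ℕ) : F :=
  ∑ a ∈ A, (Lagrange.basis A id a).coeff k * a ^ m

lemma L_eq_coeff_interpolate (A : Finset F) (k m : ℕ) :
    L A k m = (Lagrange.interpolate A id (fun x => x ^ m)).coeff k := by
  rw [Lagrange.interpolate_apply, Polynomial.finset_sum_coeff, L]
  refine Finset.sum_congr rfl fun a _ => ?_
  rw [Polynomial.coeff_C_mul]
  exact mul_comm _ _

lemma L_of_lt {A : Finset F} {k m : ℕ} (hm : m < A.card) :
    L A k m = if m = k then 1 else 0 := by
  have h : (X : F[X]) ^ m = Lagrange.interpolate A id (fun x => x ^ m) := by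
    apply Lagrange.eq_interpolate_of_eval_eq _ (Set.injOn_id _)
    · rw [Polynomial.degree_X_pow]
      exact_mod_cast hm
    · intro i _; simp
  rw [L_eq_coeff_interpolate, ← h, Polynomial.coeff_X_pow]
  simp [eq_comm]

lemma interpolate_pow_eq_mod {A : Finset F} (hA : A.Nonempty) (m : ℕ) :
    Lagrange.interpolate A id (fun x => x ^ m) =
      (X : F[X]) ^ m %ₘ Lagrange.nodal A id := by
  symm
  apply Lagrange.eq_interpolate_of_eval_eq _ (Set.injOn_id _)
  · refine lt_of_lt_of_le (Polynomial.degree_modByMonic_lt _ (Lagrange.nodal_monic)) ?_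
    rw [Lagrange.degree_nodal]
  · intro i hi
    have hdiv := Polynomial.modByMonic_add_div ((X : F[X]) ^ m)
      (Lagrange.nodal A id)
    have := congrArg (Polynomial.eval i) hdiv
    simp only [Polynomial.eval_add, Polynomial.eval_mul, Polynomial.eval_pow,
      Polynomial.eval_X] at this
    have hz : Polynomial.eval i (Lagrange.nodal A id) = 0 :=
      Lagrange.eval_nodal_at_node (v := id) hi
    rw [hz] at this
    simpa using this

lemma L_of_mid {A : Finset F} {l k m : ℕ} (hnull : IsNull A l)
    (hk : k < A.card) (hdm : A.card ≤ m) (hml : m ≤ k + l) : L A k m = 0 := by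
  have hA : A.Nonempty := Finset.card_pos.mp (lt_of_le_of_lt (Nat.zero_le _) hk)
  set g : F[X] := Lagrange.nodal A id with hg
  have hgmon : g.Monic := Lagrange.nodal_monic
  rw [L_eq_coeff_interpolate, interpolate_pow_eq_mod hA]
  have hsub : (X : F[X]) ^ m %ₘ g = X ^ m - g * (X ^ m /ₘ g) := by
    rw [eq_sub_iff_add_eq, Polynomial.modByMonic_add_div _ g]
  rw [hsub, Polynomial.coeff_sub, Polynomial.coeff_X_pow,
    if_neg (by omega : ¬ k = m), Polynomial.coeff_mul]
  have hzero : ∀ p ∈ Finset.HasAntidiagonal.antidiagonal k,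
      g.coeff p.1 * ((X : F[X]) ^ m /ₘ g).coeff p.2 = 0 := by
    rintro ⟨x, y⟩ hxy
    rw [Finset.HasAntidiagonal.mem_antidiagonal] at hxy
    by_cases hq0 : ((X : F[X]) ^ m /ₘ g).coeff y = 0
    · rw [hq0, mul_zero]
    have hy : y ≤ ((X : F[X]) ^ m /ₘ g).natDegree :=
      Polynomial.le_natDegree_of_ne_zero hq0
    have hqd : ((X : F[X]) ^ m /ₘ g).natDegree = m - A.card := by
      rw [Polynomial.natDegree_divByMonic _ hgmon, Polynomial.natDegree_X_pow, hg,
        Lagrange.natDegree_nodal]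
    rw [hqd] at hy
    have hgx : g.coeff x = 0 := by
      have h1 : 1 ≤ A.card - x := by omega
      have h2 : A.card - x ≤ l := by omega
      have := hnull (A.card - x) h1 h2
      have hxx : A.card - (A.card - x) = x := by omega
      rw [hxx] at this
      rw [hg, Lagrange.nodal_eq]
      simpa using this
    rw [hgx, zero_mul]
  rw [Finset.sum_eq_zero hzero, sub_zero]

lemma L_eq {A : Finset F} {l k m : ℕ} (hnull : IsNull A l)
    (hk : k < A.card) (hml : m ≤ k + l) :
    L A k m = if m = k then 1 else 0 := by
  rcases lt_or_ge m A.card with h | h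
  · exact L_of_lt h
  · rw [L_of_mid hnull hk h hml, if_neg (by omega)]

end SCNAux

open SCNAux in
/-- The structured Combinatorial Nullstellensatz. -/
theorem structured_combinatorial_nullstellensatz {F : Type*} [Field F]
    (n : ℕ) (A : Fin n → Finset F) (l : ℕ) (hnull : ∀ i, IsNull (A i) l)
    (f : MvPolynomial (Fin n) F) (k : Fin n → ℕ)
    (hk : ∀ i, k i < (A i).card)
    (hcoeff : MvPolynomial.coeff (Finsupp.equivFunOnFinite.symm k) f ≠ 0)
    (hdeg : f.totalDegree ≤ (∑ i, k i) + l) :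
    ∃ a : Fin n → F, (∀ i, a i ∈ A i) ∧ MvPolynomial.eval a f ≠ 0 := by
  classical
  set k' : Fin n →₀ ℕ := Finsupp.equivFunOnFinite.symm k with hk'
  have hk'app : ∀ i, k' i = k i := fun i => rfl
  -- the weight at a grid point
  set W : (Fin n → F) → F :=
    fun a => ∏ i, (Lagrange.basis (A i) id (a i)).coeff (k i) with hW
  have key : ∑ a ∈ Fintype.piFinset A, MvPolynomial.eval a f * W a
      = MvPolynomial.coeff k' f := by
    have step1 : ∀ a : Fin n → F, MvPolynomial.eval a f * W a
        = ∑ m ∈ f.support, MvPolynomial.coeff m f *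
            ∏ i, ((Lagrange.basis (A i) id (a i)).coeff (k i) * (a i) ^ (m i)) := by
      intro a
      rw [MvPolynomial.eval_eq', Finset.sum_mul]
      refine Finset.sum_congr rfl fun m _ => ?_
      rw [mul_assoc]
      congr 1
      rw [← Finset.prod_mul_distrib]
      exact Finset.prod_congr rfl fun i _ => mul_comm _ _
    calc ∑ a ∈ Fintype.piFinset A, MvPolynomial.eval a f * W a
        = ∑ a ∈ Fintype.piFinset A, ∑ m ∈ f.support, MvPolynomial.coeff m f *
            ∏ i, ((Lagrange.basis (A i) id (a i)).coeff (k i) * (a i) ^ (m i)) :=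
          Finset.sum_congr rfl fun a _ => step1 a
      _ = ∑ m ∈ f.support, ∑ a ∈ Fintype.piFinset A, MvPolynomial.coeff m f *
            ∏ i, ((Lagrange.basis (A i) id (a i)).coeff (k i) * (a i) ^ (m i)) :=
          Finset.sum_comm
      _ = ∑ m ∈ f.support, MvPolynomial.coeff m f * ∏ i, L (A i) (k i) (m i) := by
          refine Finset.sum_congr rfl fun m _ => ?_
          rw [← Finset.mul_sum,
            ← Finset.prod_univ_sum A
              (fun i x => (Lagrange.basis (A i) id x).coeff (k i) * x ^ (m i))]
          rfl
      _ = ∑ m ∈ f.support, (if m = k' then MvPolynomial.coeff m f else 0) := by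
          refine Finset.sum_congr rfl fun m hm => ?_
          by_cases hmk : m = k'
          · rw [if_pos hmk]
            have h1 : ∏ i, L (A i) (k i) (m i) = 1 :=
              Finset.prod_eq_one fun i _ => by
                rw [hmk, hk'app i, L_eq (hnull i) (hk i) (Nat.le_add_right _ _), if_pos rfl]
            rw [h1, mul_one]
          · rw [if_neg hmk]
            have hsum : ∑ i, m i ≤ (∑ i, k i) + l := by
              have h1 : m.sum (fun _ e => e) ≤ f.totalDegree :=
                MvPolynomial.le_totalDegree hm
              have h2 : m.sum (fun _ e => e) = ∑ i, m i :=
                Finsupp.sum_fintype _ _ (fun _ => rfl)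
              omega
            have hprod : ∏ i, L (A i) (k i) (m i) = 0 := by
              by_contra hne
              have hfac : ∀ i, L (A i) (k i) (m i) ≠ 0 := by
                intro i hi
                exact hne (Finset.prod_eq_zero (Finset.mem_univ i) hi)
              have hge : ∀ i, k i ≤ m i ∧ (m i = k i ∨ k i + l < m i) := by
                intro i
                rcases lt_or_ge (m i) ((A i).card) with h | h
                · have := L_of_lt (A := A i) (k := k i) h
                  by_cases hmi : m i = k i
                  · exact ⟨hmi.ge, Or.inl hmi⟩
                  · exact absurd (this.trans (if_neg hmi)) (hfac i)
                · have hki : k i < m i := lt_of_lt_of_le (hk i) h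
                  refine ⟨hki.le, Or.inr ?_⟩
                  by_contra hle
                  push_neg at hle
                  exact hfac i (L_of_mid (hnull i) (hk i) h hle)
              obtain ⟨j, hj⟩ : ∃ j, m j ≠ k j := by
                by_contra hall
                push_neg at hall
                exact hmk (Finsupp.ext fun i => by rw [hall i, hk'app i])
              have hj' : k j + l < m j := (hge j).2.resolve_left hj
              have hrest : ∑ i ∈ Finset.univ.erase j, k i ≤
                  ∑ i ∈ Finset.univ.erase j, m i :=
                Finset.sum_le_sum fun i _ => (hge i).1
              have e1 : ∑ i, k i = k j + ∑ i ∈ Finset.univ.erase j, k i :=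
                (Finset.add_sum_erase _ k (Finset.mem_univ j)).symm
              have e2 : ∑ i, m i = m j + ∑ i ∈ Finset.univ.erase j, m i :=
                (Finset.add_sum_erase _ m (Finset.mem_univ j)).symm
              omega
            rw [hprod, mul_zero]
      _ = MvPolynomial.coeff k' f := by
          rw [Finset.sum_ite_eq' f.support k' (fun m => MvPolynomial.coeff m f)]
          exact if_pos (MvPolynomial.mem_support_iff.mpr hcoeff)
  have hne : ∑ a ∈ Fintype.piFinset A, MvPolynomial.eval a f * W a ≠ 0 := by
    rw [key]; exact hcoeff
  obtain ⟨a, ha, hval⟩ := Finset.exists_ne_zero_of_sum_ne_zero hne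
  exact ⟨a, fun i => (Fintype.mem_piFinset.mp ha) i, left_ne_zero_of_mul hval⟩
end

section
/- Let A₁,...,A_n be subsets of a field F, each a coset of a finite multiplicative subgroup of F*, with each |A_i| > 1. Suppose f ∈ F[X₁,...,X_n] contains a monomial X₁^{k₁}···X_n^{k_n} with nonzero coefficient, where k_i < |A_i| for all i and deg(f) ≤ k₁+...+k_n + min{|A₁|,...,|A_n|} − 1. Then there exists a ∈ A₁×···×A_n with f(a) ≠ 0. -/
open MvPolynomial

/-- Grid lemma: a nonzero polynomial whose degree in each variable is less than
the size of the corresponding grid set does not vanish identically on the grid. -/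
lemma grid_lemma {F : Type*} [Field F] : ∀ (n : ℕ) (A : Fin n → Finset F)
    (p : MvPolynomial (Fin n) F), (∀ i, p.degreeOf i < (A i).card) → p ≠ 0 →
    ∃ a : Fin n → F, (∀ i, a i ∈ A i) ∧ MvPolynomial.eval a p ≠ 0 := by
  intro n
  induction n with
  | zero =>
    intro A p hdeg hp
    obtain ⟨c, rfl⟩ := MvPolynomial.C_surjective (Fin 0) p
    refine ⟨fun i => i.elim0, fun i => i.elim0, ?_⟩
    simpa using fun h => hp (by simp [h])
  | succ n ih =>
    intro A p hdeg hp
    classical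
    set q := MvPolynomial.finSuccEquiv F n p with hq
    have hq0 : q ≠ 0 := by
      simp only [hq, ne_eq, EmbeddingLike.map_eq_zero_iff]
      exact hp
    have hlead : q.leadingCoeff ≠ 0 := Polynomial.leadingCoeff_ne_zero.mpr hq0
    obtain ⟨a', ha', heval'⟩ := ih (fun i => A i.succ) q.leadingCoeff
      (fun i => lt_of_le_of_lt (MvPolynomial.degreeOf_coeff_finSuccEquiv p i _) (hdeg i.succ))
      hlead
    set q' := q.map (MvPolynomial.eval a') with hq'
    have hq'0 : q' ≠ 0 := by
      have h1 : q'.coeff q.natDegree ≠ 0 := by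
        simpa [hq', Polynomial.coeff_map] using heval'
      intro h; rw [h] at h1; simp at h1
    have hdeg' : q'.natDegree < (A 0).card := by
      calc q'.natDegree ≤ q.natDegree := Polynomial.natDegree_map_le
        _ = p.degreeOf 0 := MvPolynomial.natDegree_finSuccEquiv p
        _ < _ := hdeg 0
    have hsub : ¬ (A 0) ⊆ q'.roots.toFinset := by
      intro hsub
      have h1 := Finset.card_le_card hsub
      have h2 : q'.roots.toFinset.card ≤ q'.natDegree :=
        le_trans (Multiset.toFinset_card_le _) (by exact_mod_cast Polynomial.card_roots' q')
      omega
    obtain ⟨a0, ha0, hroot⟩ := Finset.not_subset.mp hsub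
    refine ⟨Fin.cons a0 a', fun i => Fin.cases ha0 ha' i, ?_⟩
    rw [MvPolynomial.eval_eq_eval_mv_eval']
    intro h
    exact hroot (Multiset.mem_toFinset.mpr ((Polynomial.mem_roots'.mpr ⟨hq'0, h⟩)))

/-- On a coset of a finite multiplicative subgroup, the `|A|`-th power is constant. -/
lemma coset_pow_const {F : Type*} [Field F] (A : Finset F)
    (H : Subgroup Fˣ) [Fintype H] (g : Fˣ)
    (hg : (A : Set F) = (fun h : Fˣ => ((g * h : Fˣ) : F)) '' (H : Set Fˣ)) :
    ∀ a ∈ A, a ^ A.card = ((g ^ A.card : Fˣ) : F) := by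
  classical
  have hinj : Function.Injective (fun h : Fˣ => ((g * h : Fˣ) : F)) := by
    intro x y hxy
    exact mul_left_cancel (Units.ext hxy)
  have hcard : A.card = Fintype.card H := by
    rw [← Set.ncard_coe_finset, hg, Set.ncard_image_of_injective _ hinj,
      ← Nat.card_coe_set_eq]
    simp [Nat.card_eq_fintype_card]
  intro a ha
  have ha' : a ∈ (A : Set F) := ha
  rw [hg] at ha'
  obtain ⟨h, hh, rfl⟩ := ha'
  have h1 : (⟨h, hh⟩ : H) ^ Fintype.card H = 1 := pow_card_eq_one
  have h2 : h ^ Fintype.card H = 1 := by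
    have h3 := congrArg (Subtype.val) h1
    rw [SubmonoidClass.coe_pow] at h3
    exact h3
  simp only [hcard]
  rw [← Units.val_pow_eq_pow_val, mul_pow, h2, mul_one]

/-- The Combinatorial Nullstellensatz over multiplicative grids. -/
theorem combinatorial_nullstellensatz_multiplicative {F : Type*} [Field F]
    (n : ℕ) (hn : 0 < n) (A : Fin n → Finset F)
    (hA : ∀ i, ∃ H : Subgroup Fˣ, ∃ _ : Fintype H, ∃ g : Fˣ,
      ((A i : Set F) = (fun h : Fˣ => ((g * h : Fˣ) : F)) '' (H : Set Fˣ)))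
    (hcard : ∀ i, 1 < (A i).card)
    (f : MvPolynomial (Fin n) F) (k : Fin n → ℕ)
    (hk : ∀ i, k i < (A i).card)
    (hcoeff : MvPolynomial.coeff (Finsupp.equivFunOnFinite.symm k) f ≠ 0)
    (hdeg : f.totalDegree ≤ (∑ i, k i) + (Finset.univ.inf' ⟨⟨0, hn⟩, Finset.mem_univ _⟩ fun i => (A i).card) - 1) :
    ∃ a : Fin n → F, (∀ i, a i ∈ A i) ∧ MvPolynomial.eval a f ≠ 0 := by
  classical
  set m : Fin n → ℕ := fun i => (A i).card with hm
  have hm0 : ∀ i, 0 < m i := fun i => lt_trans one_pos (hcard i)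
  -- constants c i with a ^ m i = c i on A i
  have hc : ∀ i, ∃ c : F, ∀ a ∈ A i, a ^ m i = c := by
    intro i
    obtain ⟨H, _, g, hg⟩ := hA i
    exact ⟨_, coset_pow_const (A i) H g hg⟩
  choose c hcspec using hc
  set minm : ℕ := Finset.univ.inf' ⟨⟨0, hn⟩, Finset.mem_univ _⟩ fun i => (A i).card with hminm
  have hminm_le : ∀ j, minm ≤ m j := fun j => Finset.inf'_le _ (Finset.mem_univ j)
  have hminm1 : 1 ≤ minm := Finset.le_inf' _ _ fun i _ => le_of_lt (hcard i)
  set k' : Fin n →₀ ℕ := Finsupp.equivFunOnFinite.symm k with hk'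
  have hk'app : ∀ i, k' i = k i := fun i => rfl
  -- the reduction map on exponent vectors
  set red : (Fin n →₀ ℕ) → (Fin n →₀ ℕ) :=
    fun e => Finsupp.equivFunOnFinite.symm (fun i => e i % m i) with hred
  have hredapp : ∀ e i, red e i = e i % m i := fun e i => rfl
  -- the reduced polynomial
  set r : MvPolynomial (Fin n) F :=
    ∑ e ∈ f.support, MvPolynomial.monomial (red e)
      (f.coeff e * ∏ i, c i ^ (e i / m i)) with hr
  -- coefficient of k' in r equals that in f
  have hredk : red k' = k' := by
    ext i
    rw [hredapp]
    exact Nat.mod_eq_of_lt (hk i)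
  have hcoeffr : r.coeff k' = f.coeff k' := by
    rw [hr, MvPolynomial.coeff_sum]
    have hmem : k' ∈ f.support := MvPolynomial.mem_support_iff.mpr hcoeff
    rw [Finset.sum_eq_single_of_mem k' hmem]
    · rw [MvPolynomial.coeff_monomial, if_pos hredk]
      have : ∀ i, k' i / m i = 0 := fun i => Nat.div_eq_of_lt (hk i)
      simp [this]
    · intro e he hne
      rw [MvPolynomial.coeff_monomial, if_neg]
      intro habs
      -- red e = k' yet e ≠ k'
      have hmod : ∀ i, e i % m i = k i := by
        intro i
        have := congrArg (fun (d : Fin n →₀ ℕ) => d i) habs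
        simpa [hredapp, hk'app] using this
      have hle : ∀ i, k i ≤ e i := fun i => (hmod i) ▸ Nat.mod_le _ _
      obtain ⟨j, hj⟩ : ∃ j, e j ≠ k j := by
        by_contra hall
        push_neg at hall
        exact hne (Finsupp.ext fun i => (hall i).trans (hk'app i).symm)
      have hej : m j + k j ≤ e j := by
        have hd := Nat.div_add_mod (e j) (m j)
        have hq : e j / m j ≠ 0 := by
          intro h0
          rw [h0, Nat.mul_zero, Nat.zero_add] at hd
          exact hj (hd ▸ hmod j)
        have h4 : 1 ≤ e j / m j := Nat.one_le_iff_ne_zero.mpr hq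
        have h5 : m j ≤ m j * (e j / m j) := by
          simpa using Nat.mul_le_mul_left (m j) h4
        have h6 : m j + k j ≤ m j * (e j / m j) + e j % m j :=
          add_le_add h5 (le_of_eq (hmod j).symm)
        rw [hd] at h6
        exact h6
      have hsum : (∑ i, e i) ≥ (∑ i, k i) + m j := by
        have h1 : (∑ i, e i) = (∑ i, k i) + ∑ i, (e i - k i) := by
          rw [← Finset.sum_add_distrib]
          exact Finset.sum_congr rfl fun i _ => (Nat.add_sub_cancel' (hle i)).symm
        have h2 : e j - k j ≤ ∑ i, (e i - k i) :=
          Finset.single_le_sum (f := fun i => e i - k i) (fun i _ => Nat.zero_le _)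
            (Finset.mem_univ j)
        omega
      have hsum' : e.sum (fun _ x => x) ≤ f.totalDegree := MvPolynomial.le_totalDegree he
      have hesum : e.sum (fun _ x => x) = ∑ i, e i :=
        Finsupp.sum_fintype _ _ (fun i => rfl)
      have hlt := hdeg
      have := hminm_le j
      omega
  have hr0 : r ≠ 0 := fun h0 => hcoeff (by rw [← hcoeffr, h0, MvPolynomial.coeff_zero])
  -- degree bound for r
  have hrdeg : ∀ i, r.degreeOf i < (A i).card := by
    intro i
    rw [MvPolynomial.degreeOf_lt_iff (hm0 i)]
    intro d hd
    have := MvPolynomial.support_sum hd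
    obtain ⟨e, _, hde⟩ := Finset.mem_biUnion.mp this
    have := MvPolynomial.support_monomial_subset hde
    rw [Finset.mem_singleton] at this
    subst this
    rw [hredapp]
    exact Nat.mod_lt _ (hm0 i)
  obtain ⟨a, ha, heval⟩ := grid_lemma n A r hrdeg hr0
  refine ⟨a, ha, ?_⟩
  -- eval a f = eval a r
  have hkey : MvPolynomial.eval a f = MvPolynomial.eval a r := by
    rw [hr, map_sum, MvPolynomial.eval_eq']
    refine Finset.sum_congr rfl fun e he => ?_
    rw [MvPolynomial.eval_monomial]
    have hprod : (red e).prod (fun i d => a i ^ d) = ∏ i, a i ^ (e i % m i) := by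
      rw [Finsupp.prod_fintype _ _ (fun i => pow_zero _)]
      exact Finset.prod_congr rfl fun i _ => by rw [hredapp]
    rw [hprod, mul_assoc, ← Finset.prod_mul_distrib]
    congr 1
    refine Finset.prod_congr rfl fun i _ => ?_
    have : a i ^ e i = (a i ^ m i) ^ (e i / m i) * a i ^ (e i % m i) := by
      rw [← pow_mul, ← pow_add, Nat.div_add_mod]
    rw [this, hcspec i (a i) (ha i)]
  rw [hkey]
  exact heval
end

section
/- Let A₁,...,A_n be λ-Vandermonde finite subsets of a field F, and let f ∈ F[X₁,...,X_n] be a polynomial in which each variable appears with degree at most λ. Then Σ_{a ∈ A₁×···×A_n} f(a) = f(0)·|A₁|···|A_n| (the sizes interpreted in F). -/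
/-- `A` is `l`-Vandermonde: the power sums `p_r(A)` vanish for `1 ≤ r ≤ l`. -/
def IsVandermonde {F : Type*} [Field F] (A : Finset F) (l : ℕ) : Prop :=
  ∀ r : ℕ, 1 ≤ r → r ≤ l → ∑ a ∈ A, a ^ r = 0

theorem sum_over_vandermonde_grid {F : Type*} [Field F]
    (n : ℕ) (A : Fin n → Finset F) (l : ℕ) (hvan : ∀ i, IsVandermonde (A i) l)
    (f : MvPolynomial (Fin n) F) (hdeg : ∀ i, f.degreeOf i ≤ l) :
    ∑ a ∈ Fintype.piFinset A, MvPolynomial.eval a f =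
      MvPolynomial.eval (0 : Fin n → F) f * ∏ i, ((A i).card : F) := by
  classical
  have heval : ∀ a : Fin n → F, MvPolynomial.eval a f =
      ∑ d ∈ f.support, f.coeff d * ∏ i, a i ^ d i := by
    intro a
    rw [MvPolynomial.eval_eq']
  calc ∑ a ∈ Fintype.piFinset A, MvPolynomial.eval a f
      = ∑ a ∈ Fintype.piFinset A, ∑ d ∈ f.support, f.coeff d * ∏ i, a i ^ d i := by
        exact Finset.sum_congr rfl fun a _ => heval a
    _ = ∑ d ∈ f.support, f.coeff d * ∑ a ∈ Fintype.piFinset A, ∏ i, a i ^ d i := by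
        rw [Finset.sum_comm]
        exact Finset.sum_congr rfl fun d _ => (Finset.mul_sum _ _ _).symm
    _ = ∑ d ∈ f.support, f.coeff d * ∏ i, ∑ x ∈ A i, x ^ d i := by
        refine Finset.sum_congr rfl fun d _ => ?_
        rw [Finset.prod_univ_sum]
    _ = ∑ d ∈ f.support, (if d = 0 then f.coeff d * ∏ i, ((A i).card : F) else 0) := by
        refine Finset.sum_congr rfl fun d hd => ?_
        by_cases h0 : d = 0
        · simp [h0]
        · rw [if_neg h0]
          obtain ⟨i, hi⟩ : ∃ i, d i ≠ 0 := by
            by_contra h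
            push_neg at h
            exact h0 (Finsupp.ext h)
          have hle : d i ≤ l := by
            refine le_trans ?_ (hdeg i)
            rw [MvPolynomial.degreeOf_eq_sup]
            exact Finset.le_sup (f := fun m => m i) hd
          have : ∑ x ∈ A i, x ^ d i = 0 := hvan i (d i) (Nat.one_le_iff_ne_zero.2 hi) hle
          rw [Finset.prod_eq_zero (Finset.mem_univ i) this, mul_zero]
    _ = MvPolynomial.eval (0 : Fin n → F) f * ∏ i, ((A i).card : F) := by
        rw [Finset.sum_ite_eq' f.support 0 (fun d => f.coeff d * ∏ i, ((A i).card : F))]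
        have he : MvPolynomial.eval (0 : Fin n → F) f = f.coeff 0 := by
          rw [MvPolynomial.eval_zero]; rfl
        by_cases h : (0 : Fin n →₀ ℕ) ∈ f.support
        · rw [if_pos h, he]
        · rw [if_neg h, he, MvPolynomial.notMem_support_iff.1 h, zero_mul]
end

section
/- Let F be a field of characteristic p > 0 and let A₁,...,A_n ⊆ F be λ-Vandermonde finite subsets such that p divides each |A_i|. If f ∈ F[X₁,...,X_n] has total degree deg(f) < n(λ+1), then Σ_{a ∈ A₁×···×A_n} f(a) = 0. -/
theorem sum_over_vandermonde_grid_char_p {F : Type*} [Field F]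
    (p : ℕ) [hp : Fact p.Prime] [CharP F p]
    (n : ℕ) (A : Fin n → Finset F) (l : ℕ) (hvan : ∀ i, IsVandermonde (A i) l)
    (hdvd : ∀ i, p ∣ (A i).card)
    (f : MvPolynomial (Fin n) F) (hdeg : f.totalDegree < n * (l + 1)) :
    ∑ a ∈ Fintype.piFinset A, MvPolynomial.eval a f = 0 := by
  classical
  simp_rw [MvPolynomial.eval_eq']
  rw [Finset.sum_comm]
  apply Finset.sum_eq_zero
  intro d hd
  rw [← Finset.mul_sum, ← Finset.prod_univ_sum (t := A) (f := fun i x => x ^ d i)]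
  -- find an index with d i ≤ l
  have hex : ∃ i, d i ≤ l := by
    by_contra h
    push_neg at h
    have hsum : ∑ i, d i ≤ f.totalDegree := by
      have := MvPolynomial.le_totalDegree hd
      rwa [Finsupp.sum_fintype] at this
      intro; rfl
    have : n * (l + 1) ≤ ∑ i, d i := by
      calc n * (l + 1) = ∑ _i : Fin n, (l + 1) := by
            simp [Finset.sum_const, mul_comm]
        _ ≤ ∑ i, d i := Finset.sum_le_sum fun i _ => h i
    omega
  obtain ⟨i, hi⟩ := hex
  have hzero : ∑ x ∈ A i, x ^ d i = 0 := by
    rcases Nat.eq_zero_or_pos (d i) with h0 | h1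
    · simp only [h0, pow_zero, Finset.sum_const, nsmul_eq_mul, mul_one]
      exact (CharP.cast_eq_zero_iff F p _).2 (hdvd i)
    · exact hvan i (d i) h1 hi
  rw [Finset.prod_eq_zero (Finset.mem_univ i) hzero, mul_zero]
end
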